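/- Let p be a prime and let a₁,…,a_{p−1} be nonnegative integers. Then p divides the product (Σ_{j=1}^{p−1} j·a_j) · ∏_{0≤u<v≤p−1} (Σ_{j=u+1}^{v} (a_j + 1)). -/
import Mathlib


open Finset

private lemma key_identity_aux (a : ℕ → ℕ) (n : ℕ) :
    (∑ j ∈ Icc 1 n, j * a j) + (∑ k ∈ range (n+1), ∑ j ∈ Icc 1 k, (a j + 1))
      + ∑ k ∈ range (n+1), k = (n+1) * ∑ j ∈ Icc 1 n, (a j + 1) := by
  induction n with
  | zero => simp
  | succ n ih =>
    rw [Finset.sum_range_succ (fun k => ∑ j ∈ Icc 1 k, (a j + 1)),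
        Finset.sum_range_succ (fun k => k),
        Finset.sum_Icc_succ_top (by omega : 1 ≤ n + 1) (fun j => j * a j),
        Finset.sum_Icc_succ_top (by omega : 1 ≤ n + 1) (fun j => a j + 1)]
    set T := ∑ j ∈ Icc 1 n, j * a j
    set A := ∑ k ∈ range (n+1), ∑ j ∈ Icc 1 k, (a j + 1)
    set B := ∑ k ∈ range (n+1), k
    set C := ∑ j ∈ Icc 1 n, (a j + 1)
    ring_nf
    ring_nf at ih
    omega

private lemma inj_sum_range {p : ℕ} [NeZero p] (f : ℕ → ZMod p)
    (hf : Set.InjOn f (range p)) :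
    ∑ k ∈ range p, f k = ∑ x : ZMod p, x := by
  have himg : (range p).image f = Finset.univ := by
    apply Finset.eq_univ_of_card
    rw [Finset.card_image_of_injOn hf, card_range, ZMod.card]
  rw [← himg, Finset.sum_image (fun x hx y hy h => hf hx hy h)]

/-- **Key divisibility claim in the proof of Theorem 4.4.**
For a prime `p` and Dynkin indices `a₁,…,a_{p-1}`, the prime `p` divides the product of the
representation size `∑_{j=1}^{p-1} j·a_j` with the numerator
`∏_{0 ≤ u < v ≤ p-1} ∑_{j=u+1}^{v} (a_j + 1)` of the Weyl dimension formula. -/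
theorem prime_divides_size_mul_weyl_numerator (p : ℕ) (hp : p.Prime) (a : ℕ → ℕ) :
    p ∣ (∑ j ∈ Icc 1 (p - 1), j * a j) *
      ∏ v ∈ range p, ∏ u ∈ range v, ∑ j ∈ Icc (u + 1) v, (a j + 1) := by
  haveI := Fact.mk hp
  haveI : NeZero p := ⟨hp.ne_zero⟩
  set S : ℕ → ℕ := fun k => ∑ j ∈ Icc 1 k, (a j + 1) with hSdef
  by_cases hinj : Set.InjOn (fun k => ((S k : ZMod p))) (range p)
  · -- all partial sums distinct mod p: p divides the size
    apply Dvd.dvd.mul_right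
    have hA : ∑ k ∈ range p, ((S k : ZMod p)) = ∑ x : ZMod p, x := inj_sum_range _ hinj
    have hB : ∑ k ∈ range p, ((k : ZMod p)) = ∑ x : ZMod p, x := by
      apply inj_sum_range
      intro x hx y hy hxy
      simp only [mem_coe, mem_range] at hx hy
      have := ZMod.val_cast_of_lt hx
      have := ZMod.val_cast_of_lt hy
      have : ZMod.val (x : ZMod p) = ZMod.val (y : ZMod p) := by rw [hxy]
      omega
    -- key identity with n = p - 1
    have hid := key_identity_aux a (p - 1)
    have hp1 : p - 1 + 1 = p := Nat.succ_pred_eq_of_pos hp.pos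
    rw [hp1] at hid
    -- Gauss sum: 2 * B = p * (p - 1)
    have hgauss : (∑ k ∈ range p, k) * 2 = p * (p - 1) := Finset.sum_range_id_mul_two p
    -- pass to ZMod p
    have hcast : ((∑ j ∈ Icc 1 (p - 1), j * a j : ℕ) : ZMod p)
        + (∑ k ∈ range p, ((S k : ZMod p))) + (∑ k ∈ range p, ((k : ZMod p)))
        = (p : ZMod p) * ((∑ j ∈ Icc 1 (p - 1), (a j + 1) : ℕ) : ZMod p) := by
      have h := congrArg (fun m : ℕ => (m : ZMod p)) hid
      simp only [hSdef]
      push_cast at h ⊢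
      exact h
    have hzero : ((∑ j ∈ Icc 1 (p - 1), j * a j : ℕ) : ZMod p) = 0 := by
      have h2B : (∑ k ∈ range p, ((k : ZMod p))) * 2 = 0 := by
        have := congrArg (fun m : ℕ => (m : ZMod p)) hgauss
        push_cast at this
        rw [this, ZMod.natCast_self, zero_mul]
      rw [hA, ← hB] at hcast
      rw [ZMod.natCast_self, zero_mul] at hcast
      have : ((∑ j ∈ Icc 1 (p - 1), j * a j : ℕ) : ZMod p)
          + (∑ k ∈ range p, ((k : ZMod p))) * 2 = 0 := by
        rw [mul_two, ← add_assoc]; exact hcast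
      rwa [h2B, add_zero] at this
    exact (ZMod.natCast_eq_zero_iff _ _).mp hzero
  · -- two partial sums agree mod p: p divides a factor of the product
    apply Dvd.dvd.mul_left
    rw [Set.InjOn] at hinj
    push_neg at hinj
    obtain ⟨u, hu, v, hv, heq, hne⟩ := hinj
    simp only [mem_coe, mem_range] at hu hv
    -- wlog u < v
    wlog hlt : u < v generalizing u v
    · exact this v u heq.symm (Ne.symm hne) hv hu (by omega)
    have hdecomp : S u + ∑ j ∈ Icc (u + 1) v, (a j + 1) = S v := by
      simp only [hSdef]
      have h1 : ∀ k, ∑ j ∈ Icc 1 k, (a j + 1) = ∑ j ∈ Ioc 0 k, (a j + 1) := by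
        intro k; congr 1
      rw [h1, h1, show Icc (u + 1) v = Ioc u v from (Finset.Icc_add_one_left_eq_Ioc u v)]
      exact Finset.sum_Ioc_consecutive _ (Nat.zero_le u) hlt.le
    have hdvd : p ∣ ∑ j ∈ Icc (u + 1) v, (a j + 1) := by
      rw [← ZMod.natCast_eq_zero_iff]
      have : ((S u : ZMod p)) + ((∑ j ∈ Icc (u + 1) v, (a j + 1) : ℕ) : ZMod p)
          = ((S v : ZMod p)) := by
        rw [← Nat.cast_add, hdecomp]
      rw [show ((S u : ZMod p)) = ((S v : ZMod p)) from heq] at this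
      rwa [add_eq_left] at this
    have h1 : (∑ j ∈ Icc (u + 1) v, (a j + 1)) ∣
        ∏ u' ∈ range v, ∑ j ∈ Icc (u' + 1) v, (a j + 1) :=
      Finset.dvd_prod_of_mem _ (mem_range.mpr hlt)
    have h2 : (∏ u' ∈ range v, ∑ j ∈ Icc (u' + 1) v, (a j + 1)) ∣
        ∏ v' ∈ range p, ∏ u' ∈ range v', ∑ j ∈ Icc (u' + 1) v', (a j + 1) :=
      Finset.dvd_prod_of_mem _ (mem_range.mpr hv)
    exact hdvd.trans (h1.trans h2)
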